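/- For every integer n and every set G of pairs (i,j) with 1 ≤ i < j ≤ n, there exists a subset G' ⊆ G with |G'| ≥ (1/3)·|G| such that G' contains no increasing path of length three, i.e., there are no indices i < j < k < l with (i,j) ∈ G', (j,k) ∈ G', and (k,l) ∈ G'. -/

import Mathlib

open Finset

private lemma fiber_card_eq (N : ℕ) (a b : Fin N) (hab : a ≠ b) (x y : Fin 3) :
    ((univ : Finset (Fin N → Fin 3)).filter fun φ => φ a = x ∧ φ b = y).card =
    ((univ : Finset (Fin N → Fin 3)).filter fun φ => φ a = 0 ∧ φ b = 0).card := by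
  apply Finset.card_bij' (fun φ _ => Function.update (Function.update φ a 0) b 0)
    (fun ψ _ => Function.update (Function.update ψ a x) b y)
  · intro φ hφ
    simp only [mem_filter, mem_univ, true_and] at hφ
    funext v
    by_cases hvb : v = b
    · subst hvb; rw [Function.update_self, hφ.2]
    · rw [Function.update_of_ne hvb]
      by_cases hva : v = a
      · subst hva; rw [Function.update_self, hφ.1]
      · rw [Function.update_of_ne hva, Function.update_of_ne hvb,
          Function.update_of_ne hva]
  · intro ψ hψ
    simp only [mem_filter, mem_univ, true_and] at hψ
    funext v
    by_cases hvb : v = b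
    · subst hvb; rw [Function.update_self, hψ.2]
    · rw [Function.update_of_ne hvb]
      by_cases hva : v = a
      · subst hva; rw [Function.update_self, hψ.1]
      · rw [Function.update_of_ne hva, Function.update_of_ne hvb,
          Function.update_of_ne hva]
  · intro φ hφ
    simp only [mem_filter, mem_univ, true_and]
    refine ⟨?_, ?_⟩
    · rw [Function.update_of_ne hab, Function.update_self]
    · rw [Function.update_self]
  · intro ψ hψ
    simp only [mem_filter, mem_univ, true_and]
    refine ⟨?_, ?_⟩
    · rw [Function.update_of_ne hab, Function.update_self]
    · rw [Function.update_self]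

private lemma count_lt_mul_three (N : ℕ) (a b : Fin N) (hab : a ≠ b) :
    ((univ : Finset (Fin N → Fin 3)).filter fun φ => φ a < φ b).card * 3 = 3 ^ N := by
  set c := ((univ : Finset (Fin N → Fin 3)).filter fun φ => φ a = 0 ∧ φ b = 0).card with hc
  have fib : ∀ z : Fin 3 × Fin 3,
      ((univ : Finset (Fin N → Fin 3)).filter fun φ => (φ a, φ b) = z).card = c := by
    intro z
    have hset : ((univ : Finset (Fin N → Fin 3)).filter fun φ => (φ a, φ b) = z) =
        ((univ : Finset (Fin N → Fin 3)).filter fun φ => φ a = z.1 ∧ φ b = z.2) := by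
      ext φ; simp [Prod.ext_iff]
    rw [hset]
    exact fiber_card_eq N a b hab z.1 z.2
  have htot : 3 ^ N = 9 * c := by
    have h1 : ((univ : Finset (Fin N → Fin 3))).card =
        ∑ z : Fin 3 × Fin 3, ((univ : Finset (Fin N → Fin 3)).filter
          fun φ => (φ a, φ b) = z).card :=
      card_eq_sum_card_fiberwise (fun φ _ => mem_univ _)
    have h2 : ((univ : Finset (Fin N → Fin 3))).card = 3 ^ N := by
      simp [Fintype.card_fun]
    rw [h2] at h1
    rw [h1]
    simp only [fib]
    simp [Finset.sum_const]
  have hlt : ((univ : Finset (Fin N → Fin 3)).filter fun φ => φ a < φ b).card = 3 * c := by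
    have h1 : ((univ : Finset (Fin N → Fin 3)).filter fun φ => φ a < φ b).card =
        ∑ z ∈ (univ : Finset (Fin 3 × Fin 3)).filter (fun z => z.1 < z.2),
          (((univ : Finset (Fin N → Fin 3)).filter fun φ => φ a < φ b).filter
            fun φ => (φ a, φ b) = z).card := by
      apply card_eq_sum_card_fiberwise
      intro φ hφ
      simp only [mem_coe, mem_filter, mem_univ, true_and] at *
      exact hφ
    have h2 : ∀ z ∈ (univ : Finset (Fin 3 × Fin 3)).filter (fun z => z.1 < z.2),
        (((univ : Finset (Fin N → Fin 3)).filter fun φ => φ a < φ b).filter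
            fun φ => (φ a, φ b) = z).card = c := by
      intro z hz
      simp only [mem_filter, mem_univ, true_and] at hz
      have hset : (((univ : Finset (Fin N → Fin 3)).filter fun φ => φ a < φ b).filter
            fun φ => (φ a, φ b) = z) =
          ((univ : Finset (Fin N → Fin 3)).filter fun φ => (φ a, φ b) = z) := by
        ext φ
        simp only [mem_filter, mem_univ, true_and, Prod.ext_iff]
        constructor
        · exact fun h => h.2
        · rintro ⟨ha, hb⟩; exact ⟨by rw [ha, hb]; exact hz, ha, hb⟩
      rw [hset, fib]
    rw [h1, Finset.sum_congr rfl h2, Finset.sum_const]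
    have h3 : ((univ : Finset (Fin 3 × Fin 3)).filter (fun z => z.1 < z.2)).card = 3 := by
      decide
    rw [h3]; ring
  rw [hlt, htot]; ring

private def vmap (n : ℕ) (v : ℕ) : Fin (n+1) := ⟨min v n, by omega⟩

theorem exists_subgraph_no_incr_path_three (n : ℕ) (G : Finset (ℕ × ℕ))
    (hG : ∀ p ∈ G, 1 ≤ p.1 ∧ p.1 < p.2 ∧ p.2 ≤ n) :
    ∃ G' ⊆ G, (1/3 : ℝ) * G.card ≤ (G'.card : ℝ) ∧
      ¬ ∃ i j k l : ℕ, i < j ∧ j < k ∧ k < l ∧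
        (i, j) ∈ G' ∧ (j, k) ∈ G' ∧ (k, l) ∈ G' := by
  classical
  let c : ℕ → Fin (n+1) := vmap n
  let F : (Fin (n+1) → Fin 3) → Finset (ℕ × ℕ) :=
    fun φ => G.filter (fun p => φ (c p.1) < φ (c p.2))
  have hsum : (∑ φ : Fin (n+1) → Fin 3, (F φ).card) * 3 = G.card * 3 ^ (n+1) := by
    have step1 : (∑ φ : Fin (n+1) → Fin 3, (F φ).card) =
        ∑ p ∈ G, ((univ : Finset (Fin (n+1) → Fin 3)).filter
          fun φ => φ (c p.1) < φ (c p.2)).card := by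
      calc (∑ φ : Fin (n+1) → Fin 3, (F φ).card)
          = ∑ φ : Fin (n+1) → Fin 3, ∑ p ∈ G,
              (if φ (c p.1) < φ (c p.2) then 1 else 0) :=
            Finset.sum_congr rfl (fun φ _ => Finset.card_filter _ _)
        _ = ∑ p ∈ G, ∑ φ : Fin (n+1) → Fin 3,
              (if φ (c p.1) < φ (c p.2) then 1 else 0) := Finset.sum_comm
        _ = ∑ p ∈ G, ((univ : Finset (Fin (n+1) → Fin 3)).filter
              fun φ => φ (c p.1) < φ (c p.2)).card :=
            Finset.sum_congr rfl (fun p _ => (Finset.card_filter _ _).symm)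
    rw [step1, Finset.sum_mul]
    have step2 : ∀ p ∈ G,
        ((univ : Finset (Fin (n+1) → Fin 3)).filter
          fun φ => φ (c p.1) < φ (c p.2)).card * 3 = 3 ^ (n+1) := by
      intro p hp
      obtain ⟨h1, h2, h3⟩ := hG p hp
      apply count_lt_mul_three
      intro h
      have hv : min p.1 n = min p.2 n := congrArg Fin.val h
      clear h step1 F c
      omega
    rw [Finset.sum_congr rfl step2, Finset.sum_const, smul_eq_mul, mul_comm]
  have hexists : ∃ φ : Fin (n+1) → Fin 3, G.card ≤ 3 * (F φ).card := by
    by_contra h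
    push_neg at h
    have hpos : 1 ≤ G.card := by
      have := h (fun _ => 0)
      omega
    have hub : (∑ φ : Fin (n+1) → Fin 3, (F φ).card) * 3 ≤ (G.card - 1) * 3 ^ (n+1) := by
      calc (∑ φ : Fin (n+1) → Fin 3, (F φ).card) * 3
          = ∑ φ : Fin (n+1) → Fin 3, (F φ).card * 3 := by rw [Finset.sum_mul]
        _ ≤ ∑ _φ : Fin (n+1) → Fin 3, (G.card - 1) := by
            apply Finset.sum_le_sum
            intro φ _
            have := h φ
            omega
        _ = 3 ^ (n+1) * (G.card - 1) := by
            rw [Finset.sum_const, smul_eq_mul]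
            congr 1
            simp [Fintype.card_fun]
        _ = (G.card - 1) * 3 ^ (n+1) := by ring
    rw [hsum] at hub
    have h3 : 0 < 3 ^ (n+1) := Nat.pow_pos (by norm_num)
    have hle : G.card ≤ G.card - 1 := Nat.le_of_mul_le_mul_right hub h3
    omega
  obtain ⟨φ, hφ⟩ := hexists
  refine ⟨F φ, Finset.filter_subset _ _, ?_, ?_⟩
  · have hcast : (G.card : ℝ) ≤ 3 * ((F φ).card : ℝ) := by exact_mod_cast hφ
    linarith
  · rintro ⟨i, j, k, l, hij, hjk, hkl, e1, e2, e3⟩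
    rw [Finset.mem_filter] at e1 e2 e3
    have q1 : (φ (c i)).val < (φ (c j)).val := e1.2
    have q2 : (φ (c j)).val < (φ (c k)).val := e2.2
    have q3 : (φ (c k)).val < (φ (c l)).val := e3.2
    have b1 : (φ (c l)).val < 3 := (φ (c l)).isLt
    omega
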